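/- For every integer q ≥ 0 and every complex number s with Re s > 1, e^{iπq/2} · ∫₀^π (sin u)^{s−2} e^{−iqu} du = π · 2^{2−s} · Γ(s−1) · (1/Γ((s+q)/2)) · (1/Γ((s−q)/2)). -/

import Mathlib

open intervalIntegral

open MeasureTheory Set Filter Topology
section Aux

/-- φ(u) = (1-cos u)/2, the substitution for the beta integral. -/
noncomputable def bqPhi (u : ℝ) : ℝ := (1 - Real.cos u) / 2

lemma bqPhi_hasDerivAt (u : ℝ) : HasDerivAt bqPhi (Real.sin u / 2) u := by
  unfold bqPhi
  exact ((Real.hasDerivAt_cos u).const_sub 1).div_const 2 |>.congr_deriv (by simp)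

lemma bqPhi_strictMono : StrictMonoOn bqPhi (Set.Icc 0 Real.pi) := by
  intro a ha b hb hab
  have := Real.strictAntiOn_cos ha hb hab
  unfold bqPhi
  linarith

lemma bqPhi_cont : Continuous bqPhi := by
  unfold bqPhi; fun_prop

lemma bqPhi_image : bqPhi '' Set.Ioo 0 Real.pi = Set.Ioo 0 1 := by
  apply Set.Subset.antisymm
  · rintro y ⟨u, hu, rfl⟩
    have h1 : Real.cos u < Real.cos 0 :=
      Real.strictAntiOn_cos ⟨le_refl 0, Real.pi_pos.le⟩ ⟨hu.1.le, hu.2.le⟩ hu.1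
    have h2 : Real.cos Real.pi < Real.cos u :=
      Real.strictAntiOn_cos ⟨hu.1.le, hu.2.le⟩ ⟨Real.pi_pos.le, le_refl _⟩ hu.2
    rw [Real.cos_zero] at h1; rw [Real.cos_pi] at h2
    constructor <;> (unfold bqPhi; linarith)
  · have h := intermediate_value_Ioo Real.pi_pos.le (bqPhi_cont.continuousOn (s := Set.Icc 0 Real.pi))
    have h0 : bqPhi 0 = 0 := by unfold bqPhi; simp
    have h1 : bqPhi Real.pi = 1 := by unfold bqPhi; rw [Real.cos_pi]; norm_num
    rwa [h0, h1] at h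

lemma cpow_ofReal_exp {x : ℝ} (hx : 0 < x) (w : ℂ) :
    (x : ℂ) ^ w = Complex.exp (w * (Real.log x : ℂ)) := by
  rw [Complex.cpow_def_of_ne_zero (Complex.ofReal_ne_zero.2 hx.ne'), Complex.ofReal_log hx.le,
    mul_comm]

lemma cpow_ofReal_sq {x : ℝ} (hx : 0 < x) (w : ℂ) :
    ((x ^ 2 : ℝ) : ℂ) ^ w = (x : ℂ) ^ (2 * w) := by
  rw [cpow_ofReal_exp (by positivity) w, cpow_ofReal_exp hx (2 * w), Real.log_pow]
  push_cast
  ring_nf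

lemma bq_pointwise (s : ℂ) {u : ℝ} (hu : u ∈ Set.Ioo 0 Real.pi) :
    |Real.sin u / 2| •
      ((2 : ℂ) ^ (s - 2) * ((bqPhi u : ℝ) : ℂ) ^ ((s - 1) / 2 - 1) *
        (1 - ((bqPhi u : ℝ) : ℂ)) ^ ((s - 1) / 2 - 1))
      = (Real.sin u : ℂ) ^ (s - 2) := by
  have hσ : 0 < Real.sin u := Real.sin_pos_of_pos_of_lt_pi hu.1 hu.2
  have hy : bqPhi u ∈ Set.Ioo (0:ℝ) 1 := bqPhi_image ▸ Set.mem_image_of_mem _ hu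
  set T : ℂ := (s - 1) / 2 - 1 with hT
  have h1 : (1 : ℂ) - ((bqPhi u : ℝ) : ℂ) = ((1 - bqPhi u : ℝ) : ℂ) := by push_cast; ring
  have hmul : ((bqPhi u : ℝ) : ℂ) ^ T * ((1 - bqPhi u : ℝ) : ℂ) ^ T
      = (((bqPhi u * (1 - bqPhi u) : ℝ)) : ℂ) ^ T := by
    rw [Complex.ofReal_mul]
    exact (Complex.mul_cpow_ofReal_nonneg hy.1.le (by linarith [hy.2]) T).symm
  have hval : bqPhi u * (1 - bqPhi u) = (Real.sin u / 2) ^ 2 := by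
    have hpyth := Real.sin_sq_add_cos_sq u
    unfold bqPhi; nlinarith
  have hsq : (((Real.sin u / 2) ^ 2 : ℝ) : ℂ) ^ T = ((Real.sin u / 2 : ℝ) : ℂ) ^ (2 * T) :=
    cpow_ofReal_sq (by positivity) T
  have h2T : 2 * T = s - 3 := by rw [hT]; ring
  have habs : |Real.sin u / 2| = Real.sin u / 2 := abs_of_pos (by positivity)
  rw [habs, h1, mul_assoc, hmul, hval, hsq, h2T, Complex.real_smul]
  have hfac : (Real.sin u : ℂ) ^ (s - 2) = (2 : ℂ) ^ (s - 2) * ((Real.sin u / 2 : ℝ) : ℂ) ^ (s - 2) := by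
    have := Complex.mul_cpow_ofReal_nonneg (by norm_num : (0:ℝ) ≤ 2) (by positivity : (0:ℝ) ≤ Real.sin u / 2) (s - 2)
    rw [← Complex.ofReal_mul, show (2 : ℝ) * (Real.sin u / 2) = Real.sin u by ring] at this
    rw [this]; norm_num
  have hadd : ((Real.sin u / 2 : ℝ) : ℂ) ^ (s - 2)
      = ((Real.sin u / 2 : ℝ) : ℂ) ^ (s - 3) * ((Real.sin u / 2 : ℝ) : ℂ) := by
    rw [show s - 2 = (s - 3) + 1 by ring,
      Complex.cpow_add _ _ (Complex.ofReal_ne_zero.2 (by positivity)), Complex.cpow_one]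
  rw [hfac, hadd]; ring

lemma bq_integrableOn (s : ℂ) (hs : 1 < s.re) :
    MeasureTheory.IntegrableOn (fun u : ℝ => (Real.sin u : ℂ) ^ (s - 2))
      (Set.Ioo 0 Real.pi) := by
  have hre : 0 < ((s - 1) / 2).re := by
    rw [Complex.div_re]
    simp only [Complex.sub_re, Complex.one_re, Complex.sub_im, Complex.one_im]
    simp [Complex.normSq]
    nlinarith
  have hg : MeasureTheory.IntegrableOn
      (fun y : ℝ => (2 : ℂ) ^ (s - 2) * ((y : ℂ) ^ ((s - 1) / 2 - 1) *
        (1 - (y : ℂ)) ^ ((s - 1) / 2 - 1))) (Set.Ioo 0 1) := by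
    have := (Complex.betaIntegral_convergent hre hre).1
    rw [integrableOn_Ioc_iff_integrableOn_Ioo] at this
    exact this.const_mul _
  have hg' : MeasureTheory.IntegrableOn
      (fun y : ℝ => (2 : ℂ) ^ (s - 2) * (y : ℂ) ^ ((s - 1) / 2 - 1) *
        (1 - (y : ℂ)) ^ ((s - 1) / 2 - 1)) (Set.Ioo 0 1) := by
    simpa [mul_assoc] using hg
  rw [← bqPhi_image,
    MeasureTheory.integrableOn_image_iff_integrableOn_abs_deriv_smul measurableSet_Ioo
      (fun x _ => (bqPhi_hasDerivAt x).hasDerivWithinAt)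
      ((bqPhi_strictMono.injOn).mono Set.Ioo_subset_Icc_self)] at hg'
  exact hg'.congr_fun (fun u hu => bq_pointwise s hu) measurableSet_Ioo

lemma bq_intervalIntegrable (q : ℕ) (s : ℂ) (hs : 1 < s.re) :
    IntervalIntegrable
      (fun u : ℝ => (Real.sin u : ℂ) ^ (s - 2) * Complex.exp (-(q : ℂ) * Complex.I * u))
      MeasureTheory.volume 0 Real.pi := by
  rw [intervalIntegrable_iff_integrableOn_Ioo_of_le Real.pi_pos.le]
  have hb : ∀ u : ℝ, ‖Complex.exp (-(q : ℂ) * Complex.I * u)‖ ≤ 1 := by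
    intro u
    rw [Complex.norm_exp]
    have : (-(q : ℂ) * Complex.I * u).re = 0 := by simp [Complex.mul_re, Complex.mul_im]
    simp [this]
  have hm : MeasureTheory.AEStronglyMeasurable
      (fun u : ℝ => Complex.exp (-(q : ℂ) * Complex.I * u))
      (MeasureTheory.volume.restrict (Set.Ioo 0 Real.pi)) := by
    apply Continuous.aestronglyMeasurable
    fun_prop
  have h2 : MeasureTheory.IntegrableOn
      (fun u : ℝ => Complex.exp (-(q : ℂ) * Complex.I * u) * (Real.sin u : ℂ) ^ (s - 2))
      (Set.Ioo 0 Real.pi) := (bq_integrableOn s hs).bdd_mul hm (Filter.Eventually.of_forall hb)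
  exact h2.congr_fun (fun u _ => mul_comm _ _) measurableSet_Ioo

lemma bq_base (s : ℂ) (hs : 1 < s.re) :
    ∫ u in (0:ℝ)..Real.pi, (Real.sin u : ℂ) ^ (s - 2)
      = (Real.pi : ℂ) * (2 : ℂ) ^ ((2 : ℂ) - s) * Complex.Gamma (s - 1) *
        (Complex.Gamma (s / 2))⁻¹ * (Complex.Gamma (s / 2))⁻¹ := by
  have hre : 0 < ((s - 1) / 2).re := by
    rw [Complex.div_re]
    simp only [Complex.sub_re, Complex.one_re, Complex.sub_im, Complex.one_im]
    simp [Complex.normSq]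
    nlinarith
  have hs1 : 0 < (s - 1).re := by simp [Complex.sub_re]; linarith
  have hs2 : 0 < (s / 2).re := by
    rw [Complex.div_re]; simp [Complex.normSq]; nlinarith
  -- step 1: the integral equals 2^(s-2) * betaIntegral ((s-1)/2) ((s-1)/2)
  have step1 : (∫ u in (0:ℝ)..Real.pi, (Real.sin u : ℂ) ^ (s - 2))
      = (2 : ℂ) ^ (s - 2) * Complex.betaIntegral ((s - 1) / 2) ((s - 1) / 2) := by
    rw [intervalIntegral.integral_of_le Real.pi_pos.le,
      MeasureTheory.integral_Ioc_eq_integral_Ioo]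
    have e1 : (∫ u in Set.Ioo (0:ℝ) Real.pi, (Real.sin u : ℂ) ^ (s - 2))
        = ∫ u in Set.Ioo (0:ℝ) Real.pi, |Real.sin u / 2| •
            ((2 : ℂ) ^ (s - 2) * ((bqPhi u : ℝ) : ℂ) ^ ((s - 1) / 2 - 1) *
              (1 - ((bqPhi u : ℝ) : ℂ)) ^ ((s - 1) / 2 - 1)) :=
      MeasureTheory.setIntegral_congr_fun measurableSet_Ioo
        (fun u hu => (bq_pointwise s hu).symm)
    have e2 := MeasureTheory.integral_image_eq_integral_abs_deriv_smul measurableSet_Ioo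
      (fun x (_ : x ∈ Set.Ioo 0 Real.pi) => (bqPhi_hasDerivAt x).hasDerivWithinAt)
      ((bqPhi_strictMono.injOn).mono Set.Ioo_subset_Icc_self)
      (fun y : ℝ => (2 : ℂ) ^ (s - 2) * ((y : ℝ) : ℂ) ^ ((s - 1) / 2 - 1) *
        (1 - ((y : ℝ) : ℂ)) ^ ((s - 1) / 2 - 1))
    rw [bqPhi_image] at e2
    rw [e1, ← e2, Complex.betaIntegral, intervalIntegral.integral_of_le (zero_le_one),
      MeasureTheory.integral_Ioc_eq_integral_Ioo]
    rw [← MeasureTheory.integral_const_mul]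
    exact MeasureTheory.setIntegral_congr_fun measurableSet_Ioo (fun y _ => by ring)
  rw [step1]
  -- Gamma algebra
  set Γh := Complex.Gamma ((s - 1) / 2)
  set Γ1 := Complex.Gamma (s - 1)
  set Γ2 := Complex.Gamma (s / 2)
  have hG1 : Γ1 ≠ 0 := Complex.Gamma_ne_zero_of_re_pos hs1
  have hG2 : Γ2 ≠ 0 := Complex.Gamma_ne_zero_of_re_pos hs2
  have hbeta : Γh * Γh = Γ1 * Complex.betaIntegral ((s - 1) / 2) ((s - 1) / 2) := by
    have := Complex.Gamma_mul_Gamma_eq_betaIntegral hre hre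
    rwa [show (s - 1) / 2 + (s - 1) / 2 = s - 1 by ring] at this
  have hdup : Γh * Γ2 = Γ1 * (2 : ℂ) ^ ((2:ℂ) - s) * (Real.sqrt Real.pi : ℂ) := by
    have := Complex.Gamma_mul_Gamma_add_half ((s - 1) / 2)
    rwa [show (s - 1) / 2 + 1 / 2 = s / 2 by ring, show 2 * ((s - 1) / 2) = s - 1 by ring,
      show (1 : ℂ) - (s - 1) = 2 - s by ring] at this
  have hXY : (2 : ℂ) ^ (s - 2) * (2 : ℂ) ^ ((2:ℂ) - s) = 1 := by
    rw [← Complex.cpow_add _ _ (two_ne_zero), show s - 2 + ((2:ℂ) - s) = 0 by ring,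
      Complex.cpow_zero]
  have hsq : (Real.sqrt Real.pi : ℂ) * (Real.sqrt Real.pi : ℂ) = (Real.pi : ℂ) := by
    rw [← Complex.ofReal_mul, Real.mul_self_sqrt Real.pi_pos.le]
  have hbeta' : Complex.betaIntegral ((s - 1) / 2) ((s - 1) / 2) = Γh * Γh / Γ1 := by
    rw [eq_div_iff hG1]; linear_combination -hbeta
  have hgh : Γh = Γ1 * (2 : ℂ) ^ ((2:ℂ) - s) * (Real.sqrt Real.pi : ℂ) / Γ2 := by
    rw [eq_div_iff hG2]; linear_combination hdup
  rw [hbeta', hgh]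
  field_simp
  linear_combination ((Real.sqrt Real.pi : ℂ) * (Real.sqrt Real.pi : ℂ)) * hXY + hsq

lemma bq_hasDerivAt_sin_cpow (w : ℂ) {u : ℝ} (hu : u ∈ Set.Ioo 0 Real.pi) :
    HasDerivAt (fun v : ℝ => (Real.sin v : ℂ) ^ w)
      (w * (Real.sin u : ℂ) ^ (w - 1) * (Real.cos u : ℂ)) u := by
  have hσ : 0 < Real.sin u := Real.sin_pos_of_pos_of_lt_pi hu.1 hu.2
  have hlog : HasDerivAt (fun v : ℝ => Real.log (Real.sin v)) (Real.cos u / Real.sin u) u := by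
    have := (Real.hasDerivAt_log hσ.ne').comp u (Real.hasDerivAt_sin u)
    simpa [div_eq_inv_mul, Function.comp_def] using this
  have hF : HasDerivAt (fun v : ℝ => Complex.exp (w * ((Real.log (Real.sin v) : ℝ) : ℂ)))
      (Complex.exp (w * ((Real.log (Real.sin u) : ℝ) : ℂ)) *
        (w * ((Real.cos u / Real.sin u : ℝ) : ℂ))) u :=
    ((hlog.ofReal_comp).const_mul w).cexp
  have hev : (fun v : ℝ => (Real.sin v : ℂ) ^ w)
      =ᶠ[nhds u] (fun v : ℝ => Complex.exp (w * ((Real.log (Real.sin v) : ℝ) : ℂ))) := by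
    filter_upwards [Ioo_mem_nhds hu.1 hu.2] with v hv
    exact cpow_ofReal_exp (Real.sin_pos_of_pos_of_lt_pi hv.1 hv.2) w
  have hD := hF.congr_of_eventuallyEq hev
  convert hD using 1
  · rfl
  rw [← cpow_ofReal_exp hσ w, show w - 1 = w - (1:ℂ) from rfl,
    Complex.cpow_sub _ _ (Complex.ofReal_ne_zero.2 hσ.ne'), Complex.cpow_one,
    Complex.ofReal_div]
  ring

lemma bq_tendsto_aux (q : ℕ) (s : ℂ) (hs : 1 < s.re) (l : Filter ℝ)
    (hl : ∀ᶠ u in l, u ∈ Set.Ioo 0 Real.pi)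
    (hsin : Filter.Tendsto (fun u : ℝ => Real.sin u) l (nhds 0)) :
    Filter.Tendsto
      (fun u : ℝ => (Real.sin u : ℂ) ^ (s - 1) * Complex.exp (-(q : ℂ) * Complex.I * u))
      l (nhds 0) := by
  have hr : 0 < (s - 1).re := by simp [Complex.sub_re]; linarith
  have hle : ∀ᶠ u in l,
      ‖(Real.sin u : ℂ) ^ (s - 1) * Complex.exp (-(q : ℂ) * Complex.I * u)‖
        ≤ Real.sin u ^ (s - 1).re := by
    filter_upwards [hl] with u hu
    have hσ : 0 < Real.sin u := Real.sin_pos_of_pos_of_lt_pi hu.1 hu.2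
    rw [norm_mul, Complex.norm_cpow_eq_rpow_re_of_pos hσ,
      Complex.norm_exp]
    have h0 : (-(q : ℂ) * Complex.I * u).re = 0 := by simp [Complex.mul_re, Complex.mul_im]
    rw [h0, Real.exp_zero, mul_one]
  have hgt : Filter.Tendsto (fun u : ℝ => Real.sin u ^ (s - 1).re) l (nhds 0) := by
    have hc : ContinuousAt (fun x : ℝ => x ^ (s - 1).re) 0 :=
      Real.continuousAt_rpow_const 0 _ (Or.inr hr.le)
    have h0 : (0:ℝ) ^ (s - 1).re = 0 := Real.zero_rpow hr.ne'
    have := hc.tendsto.comp hsin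
    rw [h0] at this
    exact this
  exact squeeze_zero_norm' hle hgt

lemma bq_rec (q : ℕ) (s : ℂ) (hs : 1 < s.re) :
    (s - 1) * (∫ u in (0:ℝ)..Real.pi,
        (Real.sin u : ℂ) ^ (s - 2) * Complex.exp (-((q : ℂ) + 1) * Complex.I * u))
      + Complex.I * (s - 1 - q) * (∫ u in (0:ℝ)..Real.pi,
        (Real.sin u : ℂ) ^ (s - 1) * Complex.exp (-(q : ℂ) * Complex.I * u)) = 0 := by
  have hs1 : 0 < (s - 1).re := by simp [Complex.sub_re]; linarith
  have hs1' : s - 1 ≠ 0 := by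
    intro h; rw [h] at hs1; simp at hs1
  -- interval integrability of the two pieces
  have h1 := bq_intervalIntegrable (q + 1) s hs
  simp only [Nat.cast_add, Nat.cast_one] at h1
  have h2 := bq_intervalIntegrable q (s + 1) (by simp [Complex.add_re]; linarith)
  simp only [show s + (1:ℂ) - 2 = s - 1 from by ring] at h2
  -- the boundary function and its derivative
  set f' : ℝ → ℂ := fun u =>
    (s - 1) * ((Real.sin u : ℂ) ^ (s - 2) * Complex.exp (-((q : ℂ) + 1) * Complex.I * u))
      + Complex.I * (s - 1 - q) *
        ((Real.sin u : ℂ) ^ (s - 1) * Complex.exp (-(q : ℂ) * Complex.I * u)) with hf'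
  have hderiv : ∀ u ∈ Set.Ioo (0:ℝ) Real.pi,
      HasDerivAt (fun u : ℝ => (Real.sin u : ℂ) ^ (s - 1) * Complex.exp (-(q : ℂ) * Complex.I * u))
        (f' u) u := by
    intro u hu
    have hσ : 0 < Real.sin u := Real.sin_pos_of_pos_of_lt_pi hu.1 hu.2
    have ha := bq_hasDerivAt_sin_cpow (s - 1) hu
    have hid : HasDerivAt (fun v : ℝ => ((v : ℝ) : ℂ)) 1 u := by
      simpa using (hasDerivAt_id u).ofReal_comp
    have hb : HasDerivAt (fun v : ℝ => Complex.exp (-(q : ℂ) * Complex.I * v))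
        (Complex.exp (-(q : ℂ) * Complex.I * u) * (-(q : ℂ) * Complex.I)) u := by
      have := (hid.const_mul (-(q : ℂ) * Complex.I)).cexp
      simpa using this
    have hprod := ha.mul hb
    convert hprod using 1
    · rfl
    · rfl
    have hcos : (Real.cos u : ℂ) = Complex.exp (-(u : ℂ) * Complex.I) + Complex.I * (Real.sin u : ℂ) := by
      rw [show -(u : ℂ) * Complex.I = (-(u : ℂ)) * Complex.I from rfl, Complex.exp_mul_I,
        Complex.cos_neg, Complex.sin_neg, ← Complex.ofReal_cos, ← Complex.ofReal_sin]
      ring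
    have hpow : (Real.sin u : ℂ) ^ (s - 1) = (Real.sin u : ℂ) ^ (s - 2) * (Real.sin u : ℂ) := by
      rw [show s - 1 = (s - 2) + 1 by ring,
        Complex.cpow_add _ _ (Complex.ofReal_ne_zero.2 hσ.ne'), Complex.cpow_one]
    have hexpadd : Complex.exp (-((q : ℂ) + 1) * Complex.I * u)
        = Complex.exp (-(q : ℂ) * Complex.I * u) * Complex.exp (-(u : ℂ) * Complex.I) := by
      rw [← Complex.exp_add]; ring_nf
    rw [hf']
    simp only
    rw [hexpadd, hpow, hcos]
    ring_nf
  have hti : IntervalIntegrable f' MeasureTheory.volume 0 Real.pi := by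
    rw [hf']
    exact (h1.const_mul (s - 1)).add (h2.const_mul (Complex.I * (s - 1 - q)))
  have hta := bq_tendsto_aux q s hs (nhdsWithin 0 (Set.Ioi 0))
    (Filter.eventually_iff_exists_mem.2 ⟨Set.Ioo 0 Real.pi,
      Ioo_mem_nhdsGT_of_mem ⟨le_refl 0, Real.pi_pos⟩, fun u hu => hu⟩)
    (by
      have := Real.continuous_sin.continuousWithinAt (s := Set.Ioi (0:ℝ)) (x := (0:ℝ))
      simpa [ContinuousWithinAt] using this)
  have htb := bq_tendsto_aux q s hs (nhdsWithin Real.pi (Set.Iio Real.pi))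
    (Filter.eventually_iff_exists_mem.2 ⟨Set.Ioo 0 Real.pi,
      Ioo_mem_nhdsLT_of_mem ⟨Real.pi_pos, le_refl _⟩, fun u hu => hu⟩)
    (by
      have := Real.continuous_sin.continuousWithinAt (s := Set.Iio Real.pi) (x := Real.pi)
      simpa [ContinuousWithinAt] using this)
  have h0 := intervalIntegral.integral_eq_sub_of_hasDerivAt_of_tendsto Real.pi_pos
    hderiv hti hta htb
  rw [sub_zero] at h0
  rw [hf'] at h0
  rw [intervalIntegral.integral_add (h1.const_mul (s - 1))
    (h2.const_mul (Complex.I * (s - 1 - q))), intervalIntegral.integral_const_mul,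
    intervalIntegral.integral_const_mul] at h0
  exact h0


lemma bq_Gamma_inv_rec (z : ℂ) :
    (Complex.Gamma z)⁻¹ = z * (Complex.Gamma (z + 1))⁻¹ := by
  rcases eq_or_ne z 0 with rfl | hz
  · simp [Complex.Gamma_zero]
  rcases eq_or_ne (Complex.Gamma z) 0 with h0 | h0
  · have hz' : ∃ m : ℕ, z = -m := by
      by_contra hc
      push_neg at hc
      exact Complex.Gamma_ne_zero hc h0
    obtain ⟨m, rfl⟩ := hz'
    have hm : m ≠ 0 := by rintro rfl; simp at hz
    obtain ⟨k, rfl⟩ := Nat.exists_eq_succ_of_ne_zero hm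
    have : (-(k.succ : ℂ)) + 1 = -k := by push_cast; ring
    rw [h0, this, Complex.Gamma_neg_nat_eq_zero]
    simp
  · rw [Complex.Gamma_add_one z hz, mul_inv, ← mul_assoc, mul_inv_cancel₀ hz, one_mul]

lemma bq_main (q : ℕ) : ∀ s : ℂ, 1 < s.re →
    (∫ u in (0:ℝ)..Real.pi,
        (Real.sin u : ℂ) ^ (s - 2) * Complex.exp (-(q : ℂ) * Complex.I * u))
      = (-Complex.I) ^ q * ((Real.pi : ℂ) * (2 : ℂ) ^ ((2 : ℂ) - s) * Complex.Gamma (s - 1) *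
          (Complex.Gamma ((s + q) / 2))⁻¹ * (Complex.Gamma ((s - q) / 2))⁻¹) := by
  induction q with
  | zero =>
    intro s hs
    have hb := bq_base s hs
    simp only [Nat.cast_zero, neg_zero, zero_mul, Complex.exp_zero, mul_one, pow_zero,
      one_mul, add_zero, sub_zero] at *
    exact hb
  | succ q ih =>
    intro s hs
    have hs1 : 0 < (s - 1).re := by simp [Complex.sub_re]; linarith
    have hs1' : s - 1 ≠ 0 := by intro h; rw [h] at hs1; simp at hs1
    have hrec := bq_rec q s hs
    have hIH := ih (s + 1) (by simp [Complex.add_re]; linarith)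
    simp only [show s + (1:ℂ) - 2 = s - 1 from by ring] at hIH
    -- express the (q+1) integral via the q integral
    have hI1 : (∫ u in (0:ℝ)..Real.pi,
          (Real.sin u : ℂ) ^ (s - 2) * Complex.exp (-((q : ℂ) + 1) * Complex.I * u))
        = -(Complex.I * (s - 1 - q)) / (s - 1) * (∫ u in (0:ℝ)..Real.pi,
          (Real.sin u : ℂ) ^ (s - 1) * Complex.exp (-(q : ℂ) * Complex.I * u)) := by
      rw [div_mul_eq_mul_div, eq_div_iff hs1']
      linear_combination hrec
    have hcast : (((q : ℕ) + 1 : ℕ) : ℂ) = (q : ℂ) + 1 := by push_cast; ring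
    rw [hcast, hI1, hIH]
    -- now pure Gamma algebra
    have hGam : Complex.Gamma (s + 1 - 1) = (s - 1) * Complex.Gamma (s - 1) := by
      rw [show s + 1 - 1 = (s - 1) + 1 by ring, Complex.Gamma_add_one _ hs1']
    have hinv : (Complex.Gamma ((s - ((q : ℂ) + 1)) / 2))⁻¹
        = ((s - (q : ℂ) - 1) / 2) * (Complex.Gamma ((s + 1 - (q : ℂ)) / 2))⁻¹ := by
      have h := bq_Gamma_inv_rec ((s - (q : ℂ) - 1) / 2)
      rw [show (s - (q : ℂ) - 1) / 2 + 1 = (s + 1 - (q : ℂ)) / 2 by ring] at h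
      rw [show (s - ((q : ℂ) + 1)) / 2 = (s - (q : ℂ) - 1) / 2 by ring]
      exact h
    have harg : (s + ((q : ℂ) + 1)) / 2 = (s + 1 + (q : ℂ)) / 2 := by ring
    have hpow2 : (2 : ℂ) ^ ((2:ℂ) - s) = 2 * (2 : ℂ) ^ ((2:ℂ) - (s + 1)) := by
      rw [show (2:ℂ) - s = 1 + ((2:ℂ) - (s + 1)) by ring,
        Complex.cpow_add _ _ two_ne_zero, Complex.cpow_one]
    rw [harg, hinv, hGam, hpow2, pow_succ, div_mul_eq_mul_div, div_eq_iff hs1']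
    ring

end Aux

/-- for every integer `q ≥ 0` and `Re s > 1`,
`e^{iπq/2} ∫₀^π (sin u)^{s−2} e^{−iqu} du = π·2^{2−s}·Γ(s−1)·(1/Γ((s+q)/2))·(1/Γ((s−q)/2))`. -/
theorem bq_gamma_formula (q : ℕ) (s : ℂ) (hs : 1 < s.re) :
    Complex.exp (Real.pi * Complex.I * q / 2) *
        ∫ u in (0:ℝ)..Real.pi,
          ((Real.sin u : ℂ) ^ (s - 2)) * Complex.exp (-(q : ℂ) * Complex.I * u)
      = (Real.pi : ℂ) * (2 : ℂ) ^ ((2 : ℂ) - s) * Complex.Gamma (s - 1) *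
          (Complex.Gamma ((s + q) / 2))⁻¹ * (Complex.Gamma ((s - q) / 2))⁻¹ := by
  rw [bq_main q s hs, ← mul_assoc]
  have hI : Complex.exp (Real.pi * Complex.I / 2) = Complex.I := by
    have h := Complex.exp_mul_I ((Real.pi : ℂ) / 2)
    rw [show ((Real.pi : ℂ) / 2) * Complex.I = Real.pi * Complex.I / 2 by ring] at h
    rw [h, show ((Real.pi : ℂ) / 2) = ((Real.pi / 2 : ℝ) : ℂ) by push_cast; ring]
    rw [← Complex.ofReal_cos, ← Complex.ofReal_sin, Real.cos_pi_div_two, Real.sin_pi_div_two]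
    simp
  have : Complex.exp (Real.pi * Complex.I * q / 2) = Complex.I ^ q := by
    rw [show (Real.pi : ℂ) * Complex.I * q / 2 = q * (Real.pi * Complex.I / 2) by ring,
      Complex.exp_nat_mul, hI]
  rw [this, ← mul_pow]
  simp [Complex.I_mul_I]
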